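/- Let m ≥ 1 and let α, k ∈ ℝ^m be nonzero vectors with nonnegative entries arranged in nondecreasing order. For a nonzero vector x ∈ ℝ^m with nonnegative entries, define the 2m×2m skew-symmetric matrix B(x) = diag(L(x₁),…,L(x_m)) / (√2·‖x‖), where L(a) is the 2×2 matrix [[0,−a],[a,0]]. Then the minimum over orthogonal matrices Q ∈ O(2m) of ‖B(α) − Q·B(k)·Qᵀ‖ (Frobenius norm) equals ‖α/‖α‖ − k/‖k‖‖, and this minimum is attained at Q = I. -/

import Mathlib

open Matrix

/-- Frobenius norm of a real square matrix. -/
noncomputable def frobNorm {m : ℕ} (M : Matrix (Fin m × Fin 2) (Fin m × Fin 2) ℝ) : ℝ :=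
  Real.sqrt (∑ p, ∑ q, (M p q) ^ 2)

/-- The skew-symmetric matrix `B(x) = diag(L(x₁),…,L(x_m)) / (√2 ‖x‖)`, where
`L(a) = [[0,−a],[a,0]]`, as a `2m × 2m` matrix indexed by `Fin m × Fin 2`. -/
noncomputable def Bmat {m : ℕ} (x : EuclideanSpace ℝ (Fin m)) :
    Matrix (Fin m × Fin 2) (Fin m × Fin 2) ℝ :=
  Matrix.of fun p q =>
    if p.1 = q.1 then
      (if p.2 = 0 then if q.2 = 1 then -(x p.1) else 0
       else if q.2 = 0 then x p.1 else 0) / (Real.sqrt 2 * ‖x‖)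
    else 0

open Finset

lemma my_sum4 {M : Type*} [AddCommMonoid M] (s₁ s₂ s₃ s₄ : Finset ℕ) (f : ℕ → ℕ → ℕ → ℕ → M) :
    ∑ i ∈ s₁, ∑ j ∈ s₂, ∑ t ∈ s₃, ∑ u ∈ s₄, f i j t u
      = ∑ t ∈ s₃, ∑ u ∈ s₄, ∑ i ∈ s₁, ∑ j ∈ s₂, f i j t u := by
  trans ∑ i ∈ s₁, ∑ t ∈ s₃, ∑ j ∈ s₂, ∑ u ∈ s₄, f i j t u
  · exact Finset.sum_congr rfl fun i _ => Finset.sum_comm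
  trans ∑ t ∈ s₃, ∑ i ∈ s₁, ∑ j ∈ s₂, ∑ u ∈ s₄, f i j t u
  · exact Finset.sum_comm
  apply Finset.sum_congr rfl; intro t _
  trans ∑ i ∈ s₁, ∑ u ∈ s₄, ∑ j ∈ s₂, f i j t u
  · exact Finset.sum_congr rfl fun i _ => Finset.sum_comm
  exact Finset.sum_comm

lemma my_sum3 {M : Type*} [AddCommMonoid M] (s₁ s₂ s₃ : Finset ℕ) (f : ℕ → ℕ → ℕ → M) :
    ∑ i ∈ s₁, ∑ t ∈ s₂, ∑ u ∈ s₃, f i t u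
      = ∑ t ∈ s₂, ∑ u ∈ s₃, ∑ i ∈ s₁, f i t u := by
  trans ∑ t ∈ s₂, ∑ i ∈ s₁, ∑ u ∈ s₃, f i t u
  · exact Finset.sum_comm
  exact Finset.sum_congr rfl fun t _ => Finset.sum_comm

lemma my_rearr (m : ℕ) (a b : ℕ → ℝ) (s : ℕ → ℕ → ℝ)
    (ha0 : 0 ≤ a 0) (hb0 : 0 ≤ b 0) (ha : Monotone a) (hb : Monotone b)
    (hs : ∀ i j, 0 ≤ s i j)
    (hrow : ∀ i, ∑ j ∈ range m, s i j ≤ 1)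
    (hcol : ∀ j, ∑ i ∈ range m, s i j ≤ 1) :
    ∑ i ∈ range m, ∑ j ∈ range m, a i * b j * s i j
      ≤ ∑ i ∈ range m, a i * b i := by
  set Δa : ℕ → ℝ := fun t => a t - if t = 0 then 0 else a (t-1) with hΔa
  set Δb : ℕ → ℝ := fun t => b t - if t = 0 then 0 else b (t-1) with hΔb
  have hΔa0 : ∀ t, 0 ≤ Δa t := by
    intro t; rcases Nat.eq_zero_or_pos t with h | h
    · simp [hΔa, h, ha0]
    · simp [hΔa, Nat.pos_iff_ne_zero.mp h]
      exact ha (Nat.sub_le t 1)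
  have hΔb0 : ∀ t, 0 ≤ Δb t := by
    intro t; rcases Nat.eq_zero_or_pos t with h | h
    · simp [hΔb, h, hb0]
    · simp [hΔb, Nat.pos_iff_ne_zero.mp h]
      exact hb (Nat.sub_le t 1)
  have keya : ∀ i, a i = ∑ t ∈ range (i+1), Δa t := by
    intro i; induction i with
    | zero => simp [hΔa]
    | succ n ih => rw [Finset.sum_range_succ, ← ih]; simp [hΔa]
  have keyb : ∀ i, b i = ∑ t ∈ range (i+1), Δb t := by
    intro i; induction i with
    | zero => simp [hΔb]
    | succ n ih => rw [Finset.sum_range_succ, ← ih]; simp [hΔb]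
  have repra : ∀ i ∈ range m, a i = ∑ t ∈ range m, Δa t * (if t ≤ i then 1 else 0) := by
    intro i hi
    rw [keya i]
    rw [show (∑ t ∈ range m, Δa t * (if t ≤ i then 1 else 0))
        = ∑ t ∈ (range m).filter (· ≤ i), Δa t by
      rw [Finset.sum_filter]; apply Finset.sum_congr rfl; intro t _; split <;> simp]
    congr 1
    ext t; simp at hi ⊢; omega
  have reprb : ∀ i ∈ range m, b i = ∑ t ∈ range m, Δb t * (if t ≤ i then 1 else 0) := by
    intro i hi
    rw [keyb i]
    rw [show (∑ t ∈ range m, Δb t * (if t ≤ i then 1 else 0))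
        = ∑ t ∈ (range m).filter (· ≤ i), Δb t by
      rw [Finset.sum_filter]; apply Finset.sum_congr rfl; intro t _; split <;> simp]
    congr 1
    ext t; simp at hi ⊢; omega
  have lhs_eq : ∑ i ∈ range m, ∑ j ∈ range m, a i * b j * s i j
      = ∑ t ∈ range m, ∑ u ∈ range m, Δa t * Δb u *
          (∑ i ∈ range m, ∑ j ∈ range m,
            (if t ≤ i then (1:ℝ) else 0) * (if u ≤ j then 1 else 0) * s i j) := by
    rw [show (∑ i ∈ range m, ∑ j ∈ range m, a i * b j * s i j)
        = ∑ i ∈ range m, ∑ j ∈ range m, ∑ t ∈ range m, ∑ u ∈ range m,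
            Δa t * Δb u * ((if t ≤ i then (1:ℝ) else 0) * (if u ≤ j then 1 else 0) * s i j) by
      apply Finset.sum_congr rfl; intro i hi
      apply Finset.sum_congr rfl; intro j hj
      rw [repra i hi, reprb j hj, Finset.sum_mul_sum, Finset.sum_mul]
      apply Finset.sum_congr rfl; intro t _
      rw [Finset.sum_mul]
      apply Finset.sum_congr rfl; intro u _
      ring]
    rw [my_sum4]
    apply Finset.sum_congr rfl; intro t _
    apply Finset.sum_congr rfl; intro u _
    rw [Finset.mul_sum]
    apply Finset.sum_congr rfl; intro i _
    rw [Finset.mul_sum]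
  have rhs_eq : ∑ i ∈ range m, a i * b i
      = ∑ t ∈ range m, ∑ u ∈ range m, Δa t * Δb u *
          (∑ i ∈ range m, (if t ≤ i then (1:ℝ) else 0) * (if u ≤ i then 1 else 0)) := by
    rw [show (∑ i ∈ range m, a i * b i)
        = ∑ i ∈ range m, ∑ t ∈ range m, ∑ u ∈ range m,
            Δa t * Δb u * ((if t ≤ i then (1:ℝ) else 0) * (if u ≤ i then 1 else 0)) by
      apply Finset.sum_congr rfl; intro i hi
      rw [repra i hi, reprb i hi, Finset.sum_mul_sum]
      apply Finset.sum_congr rfl; intro t _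
      apply Finset.sum_congr rfl; intro u _
      ring]
    rw [my_sum3]
    apply Finset.sum_congr rfl; intro t _
    apply Finset.sum_congr rfl; intro u _
    rw [Finset.mul_sum]
  rw [lhs_eq, rhs_eq]
  apply Finset.sum_le_sum; intro t _
  apply Finset.sum_le_sum; intro u _
  apply mul_le_mul_of_nonneg_left _ (mul_nonneg (hΔa0 t) (hΔb0 u))
  rcases le_total t u with htu | htu
  · rw [Finset.sum_comm]
    calc ∑ j ∈ range m, ∑ i ∈ range m,
          (if t ≤ i then (1:ℝ) else 0) * (if u ≤ j then 1 else 0) * s i j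
        ≤ ∑ j ∈ range m, (if u ≤ j then (1:ℝ) else 0) := by
          apply Finset.sum_le_sum; intro j _
          by_cases hj : u ≤ j
          · simp only [hj, if_true]
            calc ∑ i ∈ range m, (if t ≤ i then (1:ℝ) else 0) * 1 * s i j
                ≤ ∑ i ∈ range m, s i j := by
                  apply Finset.sum_le_sum; intro i _
                  by_cases hti : t ≤ i <;> simp [hti, hs i j]
              _ ≤ 1 := hcol j
          · simp [hj]
      _ ≤ ∑ i ∈ range m, (if t ≤ i then (1:ℝ) else 0) * (if u ≤ i then 1 else 0) := by
          apply Finset.sum_le_sum; intro i _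
          by_cases hui : u ≤ i
          · have hti : t ≤ i := le_trans htu hui
            simp [hui, hti]
          · simp [hui]
  · calc ∑ i ∈ range m, ∑ j ∈ range m,
          (if t ≤ i then (1:ℝ) else 0) * (if u ≤ j then 1 else 0) * s i j
        ≤ ∑ i ∈ range m, (if t ≤ i then (1:ℝ) else 0) := by
          apply Finset.sum_le_sum; intro i _
          by_cases hi : t ≤ i
          · simp only [hi, if_true]
            calc ∑ j ∈ range m, (1:ℝ) * (if u ≤ j then 1 else 0) * s i j
                ≤ ∑ j ∈ range m, s i j := by
                  apply Finset.sum_le_sum; intro j _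
                  by_cases huj : u ≤ j <;> simp [huj, hs i j]
              _ ≤ 1 := hrow i
          · simp [hi]
      _ ≤ ∑ i ∈ range m, (if t ≤ i then (1:ℝ) else 0) * (if u ≤ i then 1 else 0) := by
          apply Finset.sum_le_sum; intro i _
          by_cases hti : t ≤ i
          · have hui : u ≤ i := le_trans htu hti
            simp [hui, hti]
          · simp [hti]

lemma sum_Bmat_mul {m : ℕ} (x : EuclideanSpace ℝ (Fin m)) (g : Fin m × Fin 2 → Fin m × Fin 2 → ℝ) :
    ∑ p, ∑ q, Bmat x p q * g p q
      = ∑ i, (x i / (Real.sqrt 2 * ‖x‖)) * (g (i,1) (i,0) - g (i,0) (i,1)) := by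
  simp [Fintype.sum_prod_type, Fin.sum_univ_two, Bmat, Finset.mul_sum, Finset.sum_ite_eq,
    Finset.sum_ite_eq', mul_comm, div_eq_mul_inv]
  exact Finset.sum_congr rfl fun i _ => by ring

lemma conj_apply {m : ℕ} (x : EuclideanSpace ℝ (Fin m))
    (Q : Matrix (Fin m × Fin 2) (Fin m × Fin 2) ℝ) (p q : Fin m × Fin 2) :
    (Q * Bmat x * Qᵀ) p q
      = ∑ j, (x j / (Real.sqrt 2 * ‖x‖)) * (Q p (j,1) * Q q (j,0) - Q p (j,0) * Q q (j,1)) := by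
  simp [Matrix.mul_apply, Bmat, Fintype.sum_prod_type, Fin.sum_univ_two, Finset.sum_mul,
    Finset.mul_sum, Finset.sum_ite_eq, Finset.sum_ite_eq']
  exact Finset.sum_congr rfl fun i _ => by ring

lemma norm_sq_eq {m : ℕ} (x : EuclideanSpace ℝ (Fin m)) : ‖x‖^2 = ∑ i, x i ^ 2 := by
  rw [EuclideanSpace.norm_eq, Real.sq_sqrt (by positivity)]
  exact Finset.sum_congr rfl fun i _ => by rw [Real.norm_eq_abs, sq_abs]

lemma sum_sq_trace {m : ℕ} (M : Matrix (Fin m × Fin 2) (Fin m × Fin 2) ℝ) :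
    ∑ p, ∑ q, (M p q)^2 = Matrix.trace (Mᵀ * M) := by
  rw [Matrix.trace]
  simp only [Matrix.diag, Matrix.mul_apply, Matrix.transpose_apply, sq]
  exact Finset.sum_comm

lemma Bmat_sq_sum {m : ℕ} (x : EuclideanSpace ℝ (Fin m)) (hx : x ≠ 0) :
    ∑ p, ∑ q, (Bmat x p q)^2 = 1 := by
  have hx' : 0 < ‖x‖ := norm_pos_iff.mpr hx
  have h2 : Real.sqrt 2 * Real.sqrt 2 = 2 := Real.mul_self_sqrt (by norm_num)
  have h2' : Real.sqrt 2 ≠ 0 := by positivity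
  simp_rw [sq]
  rw [sum_Bmat_mul x (fun p q => Bmat x p q)]
  rw [show (∑ i : Fin m, x i / (Real.sqrt 2 * ‖x‖) * (Bmat x (i,1) (i,0) - Bmat x (i,0) (i,1)))
      = ∑ i : Fin m, x i ^2 / ‖x‖^2 by
    apply Finset.sum_congr rfl; intro i _
    simp only [Bmat, Matrix.of_apply]
    norm_num
    field_simp
    ring_nf
    rw [Real.sq_sqrt (by norm_num : (0:ℝ) ≤ 2)]]
  rw [← Finset.sum_div, ← norm_sq_eq, div_self (by positivity)]

theorem stmt17 {m : ℕ} (hm : 1 ≤ m) (α k : EuclideanSpace ℝ (Fin m))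
    (hα0 : α ≠ 0) (hk0 : k ≠ 0)
    (hαnn : ∀ i, 0 ≤ α i) (hknn : ∀ i, 0 ≤ k i)
    (hαmono : ∀ i j : Fin m, i ≤ j → α i ≤ α j)
    (hkmono : ∀ i j : Fin m, i ≤ j → k i ≤ k j) :
    IsLeast {r : ℝ | ∃ Q : Matrix (Fin m × Fin 2) (Fin m × Fin 2) ℝ,
        Qᵀ * Q = 1 ∧ r = frobNorm (Bmat α - Q * Bmat k * Qᵀ)}
      ‖‖α‖⁻¹ • α - ‖k‖⁻¹ • k‖ ∧
    frobNorm (Bmat α - Bmat k) = ‖‖α‖⁻¹ • α - ‖k‖⁻¹ • k‖ := by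
  have hna : 0 < ‖α‖ := norm_pos_iff.mpr hα0
  have hnk : 0 < ‖k‖ := norm_pos_iff.mpr hk0
  have h2 : Real.sqrt 2 * Real.sqrt 2 = 2 := Real.mul_self_sqrt (by norm_num)
  have h2' : Real.sqrt 2 ≠ 0 := by positivity
  set ab : ℝ := ∑ i : Fin m, (α i / ‖α‖) * (k i / ‖k‖) with hab
  -- norm of the normalized difference
  have hsum1 : ∑ i : Fin m, (α i / ‖α‖)^2 = 1 := by
    simp_rw [div_pow]
    rw [← Finset.sum_div, ← norm_sq_eq, div_self (by positivity)]
  have hsum2 : ∑ i : Fin m, (k i / ‖k‖)^2 = 1 := by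
    simp_rw [div_pow]
    rw [← Finset.sum_div, ← norm_sq_eq, div_self (by positivity)]
  have hv2 : ‖‖α‖⁻¹ • α - ‖k‖⁻¹ • k‖^2 = 2 - 2 * ab := by
    rw [norm_sq_eq]
    rw [show (∑ i : Fin m, ((‖α‖⁻¹ • α - ‖k‖⁻¹ • k) i)^2)
        = ∑ i : Fin m, ((α i/‖α‖)^2 + (k i/‖k‖)^2 - 2*((α i/‖α‖)*(k i/‖k‖))) by
      apply Finset.sum_congr rfl; intro i _
      have he : (‖α‖⁻¹ • α - ‖k‖⁻¹ • k) i = α i/‖α‖ - k i/‖k‖ := by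
        simp [div_eq_inv_mul]
      rw [he]; ring]
    rw [Finset.sum_sub_distrib, Finset.sum_add_distrib, hsum1, hsum2, ← Finset.mul_sum, ← hab]
    ring
  have hv : ‖‖α‖⁻¹ • α - ‖k‖⁻¹ • k‖ = Real.sqrt (2 - 2 * ab) := by
    rw [← hv2, Real.sqrt_sq (norm_nonneg _)]
  -- inner product of Bmat α and Bmat k
  have hBαk : ∑ p, ∑ q, Bmat α p q * Bmat k p q = ab := by
    rw [sum_Bmat_mul α (fun p q => Bmat k p q), hab]
    apply Finset.sum_congr rfl; intro i _
    simp only [Bmat, Matrix.of_apply]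
    norm_num
    field_simp
    ring_nf
    rw [Real.sq_sqrt (by norm_num : (0:ℝ) ≤ 2)]
  -- frobNorm for general orthogonal Q
  have main : ∀ Q : Matrix (Fin m × Fin 2) (Fin m × Fin 2) ℝ, Qᵀ * Q = 1 →
      frobNorm (Bmat α - Q * Bmat k * Qᵀ)
        = Real.sqrt (2 - 2 * (∑ p, ∑ q, Bmat α p q * (Q * Bmat k * Qᵀ) p q)) := by
    intro Q hQ
    have hQQ : Q * Qᵀ = 1 := mul_eq_one_comm.mp hQ
    unfold frobNorm
    congr 1
    set M := Q * Bmat k * Qᵀ with hM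
    have hexp : ∑ p, ∑ q, ((Bmat α - M) p q)^2
        = (∑ p, ∑ q, (Bmat α p q)^2) + (∑ p, ∑ q, (M p q)^2)
          - 2 * (∑ p, ∑ q, Bmat α p q * M p q) := by
      rw [show (∑ p, ∑ q, ((Bmat α - M) p q)^2)
          = ∑ p, ∑ q, ((Bmat α p q)^2 + (M p q)^2 - 2*(Bmat α p q * M p q)) by
        apply Finset.sum_congr rfl; intro p _
        apply Finset.sum_congr rfl; intro q _
        rw [Matrix.sub_apply]; ring]
      simp only [Finset.sum_sub_distrib, Finset.sum_add_distrib, ← Finset.mul_sum]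
    have hM2 : ∑ p, ∑ q, (M p q)^2 = 1 := by
      rw [sum_sq_trace]
      have e : Mᵀ * M = Q * ((Bmat k)ᵀ * Bmat k) * Qᵀ := by
        rw [hM]
        rw [Matrix.transpose_mul, Matrix.transpose_mul, Matrix.transpose_transpose]
        simp only [← Matrix.mul_assoc]
        rw [Matrix.mul_assoc (Q * (Bmat k)ᵀ) Qᵀ Q, hQ, Matrix.mul_one]
      rw [e, Matrix.trace_mul_cycle, ← Matrix.mul_assoc, hQ, Matrix.one_mul, ← sum_sq_trace,
        Bmat_sq_sum k hk0]
    rw [hexp, hM2, Bmat_sq_sum α hα0]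
    ring
  -- the key inequality
  have hineq : ∀ Q : Matrix (Fin m × Fin 2) (Fin m × Fin 2) ℝ, Qᵀ * Q = 1 →
      (∑ p, ∑ q, Bmat α p q * (Q * Bmat k * Qᵀ) p q) ≤ ab := by
    intro Q hQ
    have hQQ : Q * Qᵀ = 1 := mul_eq_one_comm.mp hQ
    have hrow1 : ∀ p, ∑ j : Fin m, (Q p (j,0)^2 + Q p (j,1)^2) = 1 := by
      intro p
      have h := Matrix.ext_iff.2 hQQ p p
      simp only [Matrix.mul_apply, Matrix.transpose_apply, Matrix.one_apply_eq] at h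
      rw [← h, Fintype.sum_prod_type]
      exact Finset.sum_congr rfl fun j _ => by rw [Fin.sum_univ_two]; ring
    have hcol1 : ∀ r, ∑ i : Fin m, (Q (i,0) r^2 + Q (i,1) r^2) = 1 := by
      intro r
      have h := Matrix.ext_iff.2 hQ r r
      simp only [Matrix.mul_apply, Matrix.transpose_apply, Matrix.one_apply_eq] at h
      rw [← h, Fintype.sum_prod_type]
      exact Finset.sum_congr rfl fun i _ => by rw [Fin.sum_univ_two]; ring
    set w : Fin m → Fin m → ℝ := fun i j =>
      Q (i,0) (j,0) * Q (i,1) (j,1) - Q (i,0) (j,1) * Q (i,1) (j,0) with hw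
    set sf : Fin m → Fin m → ℝ := fun i j =>
      (Q (i,0) (j,0)^2 + Q (i,0) (j,1)^2 + Q (i,1) (j,0)^2 + Q (i,1) (j,1)^2)/2 with hsf
    have hws : ∀ i j, w i j ≤ sf i j := by
      intro i j; simp only [hw, hsf]
      nlinarith [sq_nonneg (Q (i,0) (j,0) - Q (i,1) (j,1)), sq_nonneg (Q (i,0) (j,1) + Q (i,1) (j,0))]
    have hsnn : ∀ i j, 0 ≤ sf i j := by intro i j; simp only [hsf]; positivity
    have hsrow : ∀ i, ∑ j : Fin m, sf i j = 1 := by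
      intro i
      rw [show (∑ j : Fin m, sf i j)
          = ((∑ j : Fin m, (Q (i,0) (j,0)^2 + Q (i,0) (j,1)^2))
            + (∑ j : Fin m, (Q (i,1) (j,0)^2 + Q (i,1) (j,1)^2)))/2 by
        rw [← Finset.sum_add_distrib, ← Finset.sum_div]
        congr 1
        exact Finset.sum_congr rfl fun j _ => by ring]
      rw [hrow1 (i,0), hrow1 (i,1)]; norm_num
    have hscol : ∀ j, ∑ i : Fin m, sf i j = 1 := by
      intro j
      rw [show (∑ i : Fin m, sf i j)
          = ((∑ i : Fin m, (Q (i,0) (j,0)^2 + Q (i,1) (j,0)^2))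
            + (∑ i : Fin m, (Q (i,0) (j,1)^2 + Q (i,1) (j,1)^2)))/2 by
        rw [← Finset.sum_add_distrib, ← Finset.sum_div]
        congr 1
        exact Finset.sum_congr rfl fun i _ => by ring]
      rw [hcol1 (j,0), hcol1 (j,1)]; norm_num
    have hT : ∑ p, ∑ q, Bmat α p q * (Q * Bmat k * Qᵀ) p q
        = ∑ i : Fin m, ∑ j : Fin m, (α i/‖α‖) * ((k j/‖k‖) * w i j) := by
      rw [sum_Bmat_mul α (fun p q => (Q * Bmat k * Qᵀ) p q)]
      apply Finset.sum_congr rfl; intro i _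
      rw [conj_apply, conj_apply, ← Finset.sum_sub_distrib, Finset.mul_sum]
      apply Finset.sum_congr rfl; intro j _
      simp only [hw]
      field_simp
      ring_nf
      rw [Real.sq_sqrt (by norm_num : (0:ℝ) ≤ 2)]
    rw [hT]
    have step1 : ∑ i : Fin m, ∑ j : Fin m, (α i/‖α‖) * ((k j/‖k‖) * w i j)
        ≤ ∑ i : Fin m, ∑ j : Fin m, (α i/‖α‖) * ((k j/‖k‖) * sf i j) := by
      apply Finset.sum_le_sum; intro i _
      apply Finset.sum_le_sum; intro j _
      apply mul_le_mul_of_nonneg_left _ (div_nonneg (hαnn i) (le_of_lt hna))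
      exact mul_le_mul_of_nonneg_left (hws i j) (div_nonneg (hknn j) (le_of_lt hnk))
    refine le_trans step1 ?_
    -- transfer to ℕ-indexed sums and apply the rearrangement inequality
    set A : ℕ → ℝ := fun n => α ⟨min n (m-1), by omega⟩ / ‖α‖ with hA
    set B : ℕ → ℝ := fun n => k ⟨min n (m-1), by omega⟩ / ‖k‖ with hB
    set S : ℕ → ℕ → ℝ := fun n n' =>
      if h : n < m ∧ n' < m then sf ⟨n, h.1⟩ ⟨n', h.2⟩ else 0 with hS
    have hmin : ∀ i : Fin m, (⟨min i.val (m-1), by omega⟩ : Fin m) = i := by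
      intro i
      apply Fin.ext
      simp only []
      omega
    have hAi : ∀ i : Fin m, A i.val = α i / ‖α‖ := by
      intro i
      simp only [hA]
      rw [hmin i]
    have hBi : ∀ i : Fin m, B i.val = k i / ‖k‖ := by
      intro i
      simp only [hB]
      rw [hmin i]
    have hSi : ∀ i j : Fin m, S i.val j.val = sf i j := by
      intro i j
      simp only [hS]
      rw [dif_pos ⟨i.isLt, j.isLt⟩]
    have hAmono : Monotone A := by
      intro n n' hnn'
      simp only [hA]
      apply (div_le_div_iff_of_pos_right hna).mpr
      exact hαmono _ _ (Fin.mk_le_mk.mpr (min_le_min hnn' le_rfl))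
    have hBmono : Monotone B := by
      intro n n' hnn'
      simp only [hB]
      apply (div_le_div_iff_of_pos_right hnk).mpr
      exact hkmono _ _ (Fin.mk_le_mk.mpr (min_le_min hnn' le_rfl))
    calc ∑ i : Fin m, ∑ j : Fin m, (α i/‖α‖) * ((k j/‖k‖) * sf i j)
        = ∑ i ∈ range m, ∑ j ∈ range m, A i * B j * S i j := by
          rw [← Fin.sum_univ_eq_sum_range (fun n => ∑ j ∈ range m, A n * B j * S n j) m]
          apply Finset.sum_congr rfl; intro i _
          rw [← Fin.sum_univ_eq_sum_range (fun n => A i.val * B n * S i.val n) m]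
          apply Finset.sum_congr rfl; intro j _
          rw [hAi i, hBi j, hSi i j]; ring
      _ ≤ ∑ i ∈ range m, A i * B i := by
          apply my_rearr m A B S
          · exact div_nonneg (hαnn _) hna.le
          · exact div_nonneg (hknn _) hnk.le
          · exact hAmono
          · exact hBmono
          · intro i j
            simp only [hS]
            split
            · exact hsnn _ _
            · exact le_rfl
          · intro i
            by_cases hi : i < m
            · rw [show (∑ j ∈ range m, S i j) = ∑ j : Fin m, sf ⟨i, hi⟩ j by
                rw [← Fin.sum_univ_eq_sum_range (fun n => S i n) m]
                apply Finset.sum_congr rfl; intro j _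
                simp only [hS]
                rw [dif_pos ⟨hi, j.isLt⟩]]
              rw [hsrow]
            · rw [Finset.sum_congr rfl (fun j _ => show S i j = 0 by
                simp only [hS]; rw [dif_neg (by tauto)])]
              simp
          · intro j
            by_cases hj : j < m
            · rw [show (∑ i ∈ range m, S i j) = ∑ i : Fin m, sf i ⟨j, hj⟩ by
                rw [← Fin.sum_univ_eq_sum_range (fun n => S n j) m]
                apply Finset.sum_congr rfl; intro i _
                simp only [hS]
                rw [dif_pos ⟨i.isLt, hj⟩]]
              rw [hscol]
            · rw [Finset.sum_congr rfl (fun i _ => show S i j = 0 by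
                simp only [hS]; rw [dif_neg (by tauto)])]
              simp
      _ = ab := by
          rw [hab, ← Fin.sum_univ_eq_sum_range (fun n => A n * B n) m]
          apply Finset.sum_congr rfl; intro i _
          rw [hAi i, hBi i]
  have hone : frobNorm (Bmat α - Bmat k) = ‖‖α‖⁻¹ • α - ‖k‖⁻¹ • k‖ := by
    have h1 : (1 : Matrix (Fin m × Fin 2) (Fin m × Fin 2) ℝ)ᵀ * 1 = 1 := by simp
    have := main 1 h1
    simp only [Matrix.one_mul, Matrix.transpose_one, Matrix.mul_one] at this
    rw [this, hBαk, hv]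
  refine ⟨⟨⟨1, by simp, ?_⟩, ?_⟩, hone⟩
  · simp only [Matrix.one_mul, Matrix.transpose_one, Matrix.mul_one]
    exact hone.symm
  · rintro r ⟨Q, hQ, rfl⟩
    rw [main Q hQ, hv]
    apply Real.sqrt_le_sqrt
    have := hineq Q hQ
    linarith
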